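/- Let Sᵢ, Sⱼ be symmetric positive definite matrices, τᵢ, τⱼ > 0, Γᵢ, Γⱼ, Mᵢ, Mⱼ matrices of compatible sizes, Hᵢ ∈ ℝ^{m×n_{xᵢ}}, Hⱼ ∈ ℝ^{m×n_{xⱼ}} with rows hᵢ,₁ᵀ,…,hᵢ,ₘᵀ and hⱼ,₁ᵀ,…,hⱼ,ₘᵀ, μᵢ ∈ ℝ^{n_{xᵢ}}, μⱼ ∈ ℝ^{n_{xⱼ}}, μ_d^i, μ_d^j ∈ ℝ^m, and reals c̃, c ≥ 0. Suppose: (i) ‖Hᵢμᵢ − Hⱼμⱼ‖₂ ≥ c̃; (ii) ‖μ_d^i + μ_d^j‖₂ ≤ c̃ − c; (iii) (μ_d^i)_{m̄} ≥ √τᵢ·‖ΓᵢᵀMᵢᵀhᵢ,_{m̄}‖_{Sᵢ⁻¹} and (μ_d^j)_{m̄} ≥ √τⱼ·‖ΓⱼᵀMⱼᵀhⱼ,_{m̄}‖_{Sⱼ⁻¹} for every m̄ = 1,…,m. Then the robust inter-agent constraint holds: ‖Hᵢ(μᵢ + Mᵢζᵢ) − Hⱼ(μⱼ + Mⱼζⱼ)‖₂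 ≥ c for all ζᵢ ∈ Uᵢ = { Γᵢz : zᵀSᵢz ≤ τᵢ } and ζⱼ ∈ Uⱼ = { Γⱼz : zᵀSⱼz ≤ τⱼ }. -/

import Mathlib

open Matrix

lemma symm_dot {n : ℕ} {S : Matrix (Fin n) (Fin n) ℝ} (hS : Sᵀ = S)
    (a b : Fin n → ℝ) : b ⬝ᵥ S.mulVec a = a ⬝ᵥ S.mulVec b := by
  rw [dotProduct_mulVec, ← mulVec_transpose, hS, dotProduct_comm]

lemma cs_form {n : ℕ} (S : Matrix (Fin n) (Fin n) ℝ) (hS : S.PosDef)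
    (a b : Fin n → ℝ) :
    (a ⬝ᵥ S.mulVec b) ^ 2 ≤ (a ⬝ᵥ S.mulVec a) * (b ⬝ᵥ S.mulVec b) := by
  have hsym : Sᵀ = S := hS.isHermitian.eq
  have hd : discrim (b ⬝ᵥ S.mulVec b) (2 * (a ⬝ᵥ S.mulVec b)) (a ⬝ᵥ S.mulVec a) ≤ 0 := by
    apply discrim_le_zero
    intro t
    have h0 : 0 ≤ (a + t • b) ⬝ᵥ S.mulVec (a + t • b) := hS.posSemidef.dotProduct_mulVec_nonneg _
    have hexp : (a + t • b) ⬝ᵥ S.mulVec (a + t • b) =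
        (b ⬝ᵥ S.mulVec b) * t ^ 2 + 2 * (a ⬝ᵥ S.mulVec b) * t + a ⬝ᵥ S.mulVec a := by
      simp only [mulVec_add, mulVec_smul, add_dotProduct, smul_dotProduct,
        dotProduct_add, dotProduct_smul, symm_dot hsym a b, smul_eq_mul]
      ring
    linarith [hexp ▸ h0]
  rw [discrim] at hd
  nlinarith [hd]

lemma cs_inv {n : ℕ} (S : Matrix (Fin n) (Fin n) ℝ) (hS : S.PosDef)
    (v z : Fin n → ℝ) :
    (v ⬝ᵥ z) ^ 2 ≤ (v ⬝ᵥ S⁻¹.mulVec v) * (z ⬝ᵥ S.mulVec z) := by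
  have hsym : Sᵀ = S := hS.isHermitian.eq
  have hinv : S * S⁻¹ = 1 := mul_nonsing_inv S (isUnit_iff_ne_zero.mpr hS.det_pos.ne')
  set a := S⁻¹.mulVec v with ha
  have hv : S.mulVec a = v := by
    rw [ha, mulVec_mulVec, hinv, one_mulVec]
  have h1 : v ⬝ᵥ z = a ⬝ᵥ S.mulVec z := by
    conv_lhs => rw [← hv]
    rw [dotProduct_comm, symm_dot hsym]
  have h2 : v ⬝ᵥ S⁻¹.mulVec v = a ⬝ᵥ S.mulVec a := by
    rw [hv, ← ha, dotProduct_comm]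
  rw [h1, h2]
  exact cs_form S hS a z

/-- Componentwise bound: `|h ⬝ᵥ (M (Γ z))| ≤ √τ ⬝ ‖ΓᵀMᵀh‖_{S⁻¹}` when `zᵀSz ≤ τ`. -/
lemma component_bound {nζ nbar nx : ℕ} (S : Matrix (Fin nbar) (Fin nbar) ℝ)
    (hS : S.PosDef) (τ : ℝ) (hτ : 0 < τ)
    (Γ : Matrix (Fin nζ) (Fin nbar) ℝ) (M : Matrix (Fin nx) (Fin nζ) ℝ)
    (h : Fin nx → ℝ) (z : Fin nbar → ℝ) (hz : z ⬝ᵥ S.mulVec z ≤ τ) :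
    |h ⬝ᵥ (M.mulVec (Γ.mulVec z))| ≤
      Real.sqrt τ * Real.sqrt ((Γᵀ.mulVec (Mᵀ.mulVec h)) ⬝ᵥ
        S⁻¹.mulVec (Γᵀ.mulVec (Mᵀ.mulVec h))) := by
  set v := Γᵀ.mulVec (Mᵀ.mulVec h) with hv
  have hrw : h ⬝ᵥ (M.mulVec (Γ.mulVec z)) = v ⬝ᵥ z := by
    rw [dotProduct_mulVec, ← mulVec_transpose, dotProduct_mulVec, ← mulVec_transpose, hv]
  have hvS : 0 ≤ v ⬝ᵥ S⁻¹.mulVec v := (hS.inv.posSemidef.dotProduct_mulVec_nonneg v)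
  have hzz : 0 ≤ z ⬝ᵥ S.mulVec z := hS.posSemidef.dotProduct_mulVec_nonneg z
  have hcs : (v ⬝ᵥ z) ^ 2 ≤ (v ⬝ᵥ S⁻¹.mulVec v) * τ := by
    calc (v ⬝ᵥ z) ^ 2 ≤ (v ⬝ᵥ S⁻¹.mulVec v) * (z ⬝ᵥ S.mulVec z) := cs_inv S hS v z
      _ ≤ (v ⬝ᵥ S⁻¹.mulVec v) * τ := by
          exact mul_le_mul_of_nonneg_left hz hvS
  rw [hrw]
  have : |v ⬝ᵥ z| = Real.sqrt ((v ⬝ᵥ z) ^ 2) := (Real.sqrt_sq_eq_abs _).symm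
  rw [this]
  calc Real.sqrt ((v ⬝ᵥ z) ^ 2) ≤ Real.sqrt ((v ⬝ᵥ S⁻¹.mulVec v) * τ) :=
        Real.sqrt_le_sqrt hcs
    _ = Real.sqrt τ * Real.sqrt (v ⬝ᵥ S⁻¹.mulVec v) := by
        rw [Real.sqrt_mul hvS, mul_comm]

/-- The SOCP reformulation implies the robust inter-agent constraint:
`‖Hᵢ(μᵢ + Mᵢζᵢ) − Hⱼ(μⱼ + Mⱼζⱼ)‖₂ ≥ c` for all `ζᵢ ∈ Uᵢ`, `ζⱼ ∈ Uⱼ`. -/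
theorem stmt_11 {nζi nbari nxi nζj nbarj nxj m : ℕ}
    (Si : Matrix (Fin nbari) (Fin nbari) ℝ) (hSi : Si.PosDef)
    (Sj : Matrix (Fin nbarj) (Fin nbarj) ℝ) (hSj : Sj.PosDef)
    (τi τj : ℝ) (hτi : 0 < τi) (hτj : 0 < τj)
    (Γi : Matrix (Fin nζi) (Fin nbari) ℝ) (Γj : Matrix (Fin nζj) (Fin nbarj) ℝ)
    (Mi : Matrix (Fin nxi) (Fin nζi) ℝ) (Mj : Matrix (Fin nxj) (Fin nζj) ℝ)
    (Hi : Matrix (Fin m) (Fin nxi) ℝ) (Hj : Matrix (Fin m) (Fin nxj) ℝ)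
    (μi : Fin nxi → ℝ) (μj : Fin nxj → ℝ)
    (μdi μdj : Fin m → ℝ) (ctilde c : ℝ) (hctilde : 0 ≤ ctilde) (hc : 0 ≤ c)
    (h1 : Real.sqrt (∑ i, (Hi.mulVec μi i - Hj.mulVec μj i) ^ 2) ≥ ctilde)
    (h2 : Real.sqrt (∑ mb, (μdi mb + μdj mb) ^ 2) ≤ ctilde - c)
    (hμdi : ∀ mb : Fin m,
      Real.sqrt τi * Real.sqrt ((Γiᵀ.mulVec (Miᵀ.mulVec (Hi mb))) ⬝ᵥ
        Si⁻¹.mulVec (Γiᵀ.mulVec (Miᵀ.mulVec (Hi mb)))) ≤ μdi mb)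
    (hμdj : ∀ mb : Fin m,
      Real.sqrt τj * Real.sqrt ((Γjᵀ.mulVec (Mjᵀ.mulVec (Hj mb))) ⬝ᵥ
        Sj⁻¹.mulVec (Γjᵀ.mulVec (Mjᵀ.mulVec (Hj mb)))) ≤ μdj mb) :
    ∀ zi : Fin nbari → ℝ, zi ⬝ᵥ Si.mulVec zi ≤ τi →
      ∀ zj : Fin nbarj → ℝ, zj ⬝ᵥ Sj.mulVec zj ≤ τj →
        Real.sqrt (∑ i, (Hi.mulVec (μi + Mi.mulVec (Γi.mulVec zi)) i -
            Hj.mulVec (μj + Mj.mulVec (Γj.mulVec zj)) i) ^ 2) ≥ c := by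
  intro zi hzi zj hzj
  -- componentwise bounds
  have hbi : ∀ mb : Fin m, |Hi.mulVec (Mi.mulVec (Γi.mulVec zi)) mb| ≤ μdi mb := by
    intro mb
    exact le_trans (component_bound Si hSi τi hτi Γi Mi (Hi mb) zi hzi) (hμdi mb)
  have hbj : ∀ mb : Fin m, |Hj.mulVec (Mj.mulVec (Γj.mulVec zj)) mb| ≤ μdj mb := by
    intro mb
    exact le_trans (component_bound Sj hSj τj hτj Γj Mj (Hj mb) zj hzj) (hμdj mb)
  -- set up Euclidean space vectors
  set u : EuclideanSpace ℝ (Fin m) := WithLp.toLp 2 (fun i => Hi.mulVec μi i - Hj.mulVec μj i) with hu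
  set w : EuclideanSpace ℝ (Fin m) := WithLp.toLp 2 (fun i =>
    Hi.mulVec (Mi.mulVec (Γi.mulVec zi)) i - Hj.mulVec (Mj.mulVec (Γj.mulVec zj)) i) with hw
  have normed : ∀ x : EuclideanSpace ℝ (Fin m), ‖x‖ = Real.sqrt (∑ i, (x i) ^ 2) := by
    intro x
    rw [EuclideanSpace.norm_eq]
    congr 1
    apply Finset.sum_congr rfl
    intro i _
    rw [Real.norm_eq_abs, sq_abs]
  -- the goal sum is over u + w
  have hgoal : (∑ i, (Hi.mulVec (μi + Mi.mulVec (Γi.mulVec zi)) i -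
      Hj.mulVec (μj + Mj.mulVec (Γj.mulVec zj)) i) ^ 2) = ∑ i, (u i + w i) ^ 2 := by
    apply Finset.sum_congr rfl
    intro i _
    simp only [mulVec_add, Pi.add_apply, hu, hw, PiLp.toLp_apply]
    ring_nf
  rw [hgoal]
  have hC : Real.sqrt (∑ i, (u i + w i) ^ 2) = ‖u + w‖ := by
    rw [normed (u + w)]
    congr 1
  have hA : Real.sqrt (∑ i, (u i) ^ 2) = ‖u‖ := (normed u).symm
  -- triangle inequality : ‖u‖ ≤ ‖u + w‖ + ‖w‖
  have htri : ‖u‖ ≤ ‖u + w‖ + ‖w‖ := by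
    calc ‖u‖ = ‖(u + w) + (-w)‖ := by rw [add_neg_cancel_right]
      _ ≤ ‖u + w‖ + ‖-w‖ := norm_add_le _ _
      _ = ‖u + w‖ + ‖w‖ := by rw [norm_neg]
  -- bound ‖w‖
  have hwB : ‖w‖ ≤ Real.sqrt (∑ mb, (μdi mb + μdj mb) ^ 2) := by
    rw [normed w]
    apply Real.sqrt_le_sqrt
    apply Finset.sum_le_sum
    intro i _
    have h1' : |w i| ≤ μdi i + μdj i := by
      calc |w i| ≤ |Hi.mulVec (Mi.mulVec (Γi.mulVec zi)) i| +
            |Hj.mulVec (Mj.mulVec (Γj.mulVec zj)) i| := abs_sub _ _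
        _ ≤ μdi i + μdj i := add_le_add (hbi i) (hbj i)
    calc (w i) ^ 2 = |w i| ^ 2 := (sq_abs _).symm
      _ ≤ (μdi i + μdj i) ^ 2 := by
          apply pow_le_pow_left₀ (abs_nonneg _) h1'
  have hAc : ‖u‖ ≥ ctilde := by rw [← hA]; exact h1
  rw [hC]
  linarith
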